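/- arXiv:1403.3995 — 2 statements merged into one kernel-verified Lean document; each statement's English description precedes it below -/
import Mathlib

section
/- Let a, b, c, d ∈ ℝ, ρ : ℝ → ℝ differentiable, and x₁, x₂, x₃ : ℝ → ℝ differentiable with x₁' = a x₂ + x₃, x₂' = b x₁ + c x₃, x₃' = ρ ∘ x₁ + d x₂. Then x₁ is three times differentiable and x₁''' = (ρ'(x₁) + ab + cd) x₁' + a c ρ(x₁) + b d x₁. -/
theorem stmt_15 (a b c d : ℝ) (ρ : ℝ → ℝ) (hρ : Differentiable ℝ ρ)
    (x₁ x₂ x₃ : ℝ → ℝ)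
    (hx₁ : Differentiable ℝ x₁) (hx₂ : Differentiable ℝ x₂) (hx₃ : Differentiable ℝ x₃)
    (h1 : ∀ t, deriv x₁ t = a * x₂ t + x₃ t)
    (h2 : ∀ t, deriv x₂ t = b * x₁ t + c * x₃ t)
    (h3 : ∀ t, deriv x₃ t = ρ (x₁ t) + d * x₂ t) :
    Differentiable ℝ (deriv x₁) ∧ Differentiable ℝ (deriv (deriv x₁)) ∧
      ∀ t, deriv (deriv (deriv x₁)) t =
        (deriv ρ (x₁ t) + a * b + c * d) * deriv x₁ t +
          a * c * ρ (x₁ t) + b * d * x₁ t := by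
  have e1 : deriv x₁ = fun t => a * x₂ t + x₃ t := funext h1
  have d1 : Differentiable ℝ (deriv x₁) := by
    rw [e1]; exact (hx₂.const_mul a).add hx₃
  have e2 : deriv (deriv x₁) =
      fun t => a * (b * x₁ t + c * x₃ t) + (ρ (x₁ t) + d * x₂ t) := by
    rw [e1]; funext t
    rw [deriv_fun_add ((hx₂ t).const_mul a) (hx₃ t), deriv_const_mul a (hx₂ t), h2, h3]
  have d2 : Differentiable ℝ (deriv (deriv x₁)) := by
    rw [e2]
    exact (((hx₁.const_mul b).add (hx₃.const_mul c)).const_mul a).add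
      ((hρ.comp hx₁).add (hx₂.const_mul d))
  refine ⟨d1, d2, fun t => ?_⟩
  rw [e2]
  have H : HasDerivAt (fun t => a * (b * x₁ t + c * x₃ t) + (ρ (x₁ t) + d * x₂ t))
      (a * (b * deriv x₁ t + c * deriv x₃ t) +
        (deriv ρ (x₁ t) * deriv x₁ t + d * deriv x₂ t)) t :=
    ((((hx₁ t).hasDerivAt.const_mul b).add ((hx₃ t).hasDerivAt.const_mul c)).const_mul a).add
      ((((hρ (x₁ t)).hasDerivAt).comp t (hx₁ t).hasDerivAt).add
        ((hx₂ t).hasDerivAt.const_mul d))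
  rw [H.deriv, h1, h2, h3]; ring
end

section
/- Let a, b ∈ ℝ with a ≠ 0. If (x_n, y_n) solves the rational system x_{n+1} = x_n/y_n, y_{n+1} = x_n/(a x_n + b y_n), with y_n ≠ 0 and a x_n + b y_n ≠ 0 for all n, then x_{n+2} = a x_{n+1} + b for all n, and y_n = x_n / x_{n+1} whenever x_{n+1} ≠ 0. -/
theorem stmt_18 (a b : ℝ) (ha : a ≠ 0) (x y : ℕ → ℝ)
    (hy0 : ∀ n, y n ≠ 0) (hden : ∀ n, a * x n + b * y n ≠ 0)
    (hx : ∀ n, x (n + 1) = x n / y n)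
    (hy : ∀ n, y (n + 1) = x n / (a * x n + b * y n)) :
    (∀ n, x (n + 2) = a * x (n + 1) + b) ∧
      (∀ n, x (n + 1) ≠ 0 → y n = x n / x (n + 1)) := by
  have hxne : ∀ n, x n ≠ 0 := by
    intro n hn
    have := hy0 (n + 1)
    rw [hy n, hn] at this
    simp at this
  constructor
  · intro n
    have h1 := hx (n + 1)
    rw [hy n, hx n] at h1
    rw [h1, hx n]
    field_simp [hxne n, hy0 n, hden n]
  · intro n hn
    rw [hx n]
    field_simp [hxne n, hy0 n]
end
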